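/- arXiv:2210.14032 — 4 statements merged into one kernel-verified Lean document; each statement's English description precedes it below -/
import Mathlib

section
/- Let p be a probability distribution on R^D with mean m and positive-definite covariance Σ. Then KL(p ‖ N(0, I)) = KL(p ‖ N(m, Σ)) + KL(N(m, Σ) ‖ N(0, I)), i.e., the KL divergence to the standard normal decomposes as the divergence to the closest Gaussian plus the divergence of that Gaussian to the standard normal. -/
open MeasureTheory Matrix
open Filter
open scoped ENNReal NNReal

/-- Density of the multivariate Gaussian `N(m, Σ)` on `ℝ^D`. -/
noncomputable def gaussianDensity {D : ℕ} (m : Fin D → ℝ) (S : Matrix (Fin D) (Fin D) ℝ)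
    (x : Fin D → ℝ) : ℝ :=
  (Real.sqrt ((2 * Real.pi) ^ D * S.det))⁻¹ *
    Real.exp (-(1 / 2) * dotProduct (x - m) (S⁻¹ *ᵥ (x - m)))

/-- The multivariate Gaussian measure `N(m, Σ)` on `ℝ^D`. -/
noncomputable def gaussianMeasure {D : ℕ} (m : Fin D → ℝ) (S : Matrix (Fin D) (Fin D) ℝ) :
    Measure (Fin D → ℝ) :=
  volume.withDensity fun x => ENNReal.ofReal (gaussianDensity m S x)

/-- Kullback-Leibler divergence `KL(p ‖ q) = ∫ log (dp/dq) dp`. -/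
noncomputable def klDiv' {D : ℕ} (p q : Measure (Fin D → ℝ)) : ℝ :=
  ∫ x, Real.log ((p.rnDeriv q x).toReal) ∂p

section Aux
variable {D : ℕ} (m : Fin D → ℝ) (S : Matrix (Fin D) (Fin D) ℝ)

lemma continuous_gaussianDensity : Continuous (gaussianDensity m S) := by
  unfold gaussianDensity
  refine continuous_const.mul (Real.continuous_exp.comp (continuous_const.mul ?_))
  simp only [dotProduct, Matrix.mulVec, Pi.sub_apply]
  refine continuous_finset_sum _ fun i _ => ?_
  refine (((continuous_apply i).sub continuous_const)).mul ?_
  exact continuous_finset_sum _ fun j _ =>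
    continuous_const.mul ((continuous_apply j).sub continuous_const)

lemma measurable_gaussianDensity : Measurable (gaussianDensity m S) :=
  (continuous_gaussianDensity m S).measurable

variable {S} in
lemma gaussianDensity_pos (hS : S.PosDef) (x : Fin D → ℝ) : 0 < gaussianDensity m S x := by
  have hdet : 0 < (2 * Real.pi) ^ D * S.det :=
    mul_pos (pow_pos (by positivity) D) hS.det_pos
  exact mul_pos (inv_pos.mpr (Real.sqrt_pos.mpr hdet)) (Real.exp_pos _)

lemma gaussianMeasure_ac : gaussianMeasure m S ≪ volume :=
  withDensity_absolutelyContinuous _ _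

variable {S} in
lemma ac_gaussianMeasure (hS : S.PosDef) : (volume : Measure (Fin D → ℝ)) ≪ gaussianMeasure m S :=
  withDensity_absolutelyContinuous'
    ((measurable_gaussianDensity m S).ennreal_ofReal.aemeasurable)
    (ae_of_all _ fun x => by
      simp [ENNReal.ofReal_eq_zero, not_le, gaussianDensity_pos m hS x])

instance sigmaFinite_gaussianMeasure : SigmaFinite (gaussianMeasure m S) :=
  SigmaFinite.withDensity_of_ne_top (ae_of_all _ fun _ => ENNReal.ofReal_ne_top)

variable {S} in
lemma log_rnDeriv_gaussian (μ : Measure (Fin D → ℝ)) [SigmaFinite μ] (hμ : μ ≪ volume)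
    (hS : S.PosDef) :
    (fun x => Real.log ((μ.rnDeriv (gaussianMeasure m S) x).toReal)) =ᵐ[μ]
      fun x => Real.log ((μ.rnDeriv volume x).toReal) - Real.log (gaussianDensity m S x) := by
  have h1 : μ.rnDeriv (gaussianMeasure m S) =ᵐ[volume]
      fun x => (ENNReal.ofReal (gaussianDensity m S x))⁻¹ * μ.rnDeriv volume x :=
    Measure.rnDeriv_withDensity_right μ volume
      ((measurable_gaussianDensity m S).ennreal_ofReal.aemeasurable)
      (ae_of_all _ fun x => by
        simp [ENNReal.ofReal_eq_zero, not_le, gaussianDensity_pos m hS x])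
      (ae_of_all _ fun x => ENNReal.ofReal_ne_top)
  filter_upwards [hμ.ae_le h1, hμ.ae_le (Measure.rnDeriv_lt_top μ volume),
    Measure.rnDeriv_pos hμ] with x hx hlt hpos
  have hg := gaussianDensity_pos m hS x
  have hr : 0 < (μ.rnDeriv volume x).toReal := ENNReal.toReal_pos hpos.ne' hlt.ne
  rw [hx, ENNReal.toReal_mul, ENNReal.toReal_inv, ENNReal.toReal_ofReal hg.le,
    Real.log_mul (by positivity) hr.ne', Real.log_inv]
  ring

end Aux
section B
variable {D : ℕ} (m : Fin D → ℝ) (S : Matrix (Fin D) (Fin D) ℝ)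
  (q : Measure (Fin D → ℝ)) [IsProbabilityMeasure q]

lemma abs_le_one_add_sq (a : ℝ) : |a| ≤ 1 + a ^ 2 := by
  rcases abs_cases a with ⟨h, _⟩ | ⟨h, _⟩ <;> nlinarith [sq_nonneg (a - 1), sq_nonneg (a + 1)]

variable {q} in
lemma integrable_coord (hm2 : ∀ i, Integrable (fun x => (x i) ^ 2) q) (i : Fin D) :
    Integrable (fun x => x i) q := by
  refine ((integrable_const (1:ℝ)).add (hm2 i)).mono'
    ((measurable_pi_apply i).aestronglyMeasurable) (ae_of_all _ fun x => ?_)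
  simpa using abs_le_one_add_sq (x i)

variable {q} in
lemma integrable_coord_mul (hm2 : ∀ i, Integrable (fun x => (x i) ^ 2) q) (i j : Fin D) :
    Integrable (fun x => x i * x j) q := by
  refine ((hm2 i).add (hm2 j)).mono'
    (((measurable_pi_apply i).mul (measurable_pi_apply j)).aestronglyMeasurable)
    (ae_of_all _ fun x => ?_)
  have h1 : |x i * x j| ≤ (x i) ^ 2 + (x j) ^ 2 := by
    rw [abs_mul]
    nlinarith [sq_nonneg (|x i| - |x j|), abs_nonneg (x i), abs_nonneg (x j), sq_abs (x i),
      sq_abs (x j)]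
  simpa [abs_mul] using h1

variable {q} in
lemma integrable_sub_mul (hm2 : ∀ i, Integrable (fun x => (x i) ^ 2) q) (i j : Fin D) :
    Integrable (fun x => (x i - m i) * (x j - m j)) q := by
  have h : (fun x : Fin D → ℝ => (x i - m i) * (x j - m j))
      = fun x => x i * x j - m j * x i - m i * x j + m i * m j := by
    funext x; ring
  rw [h]
  have h1 : Integrable (fun x : Fin D → ℝ => x i * x j - m j * x i) q :=
    (integrable_coord_mul hm2 i j).sub ((integrable_coord hm2 i).const_mul (m j))
  have h2 : Integrable (fun x : Fin D → ℝ => x i * x j - m j * x i - m i * x j) q :=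
    h1.sub ((integrable_coord hm2 j).const_mul (m i))
  exact h2.add (integrable_const _)

variable {q} in
lemma integral_coord_mul_self (hm2 : ∀ i, Integrable (fun x => (x i) ^ 2) q)
    (hq1 : ∀ i, ∫ x, x i ∂q = m i)
    (hq2 : ∀ i j, ∫ x, (x i - m i) * (x j - m j) ∂q = S i j) (i : Fin D) :
    ∫ x, x i * x i ∂q = S i i + m i ^ 2 := by
  have h := hq2 i i
  have key : ∫ x, (x i - m i) * (x i - m i) ∂q
      = ∫ x, x i * x i ∂q - 2 * m i * m i + m i * m i := by
    have hexp : ∀ x : Fin D → ℝ, (x i - m i) * (x i - m i)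
        = (x i * x i - 2 * m i * x i) + m i * m i := fun x => by ring
    simp_rw [hexp]
    have hf : Integrable (fun x : Fin D → ℝ => x i * x i - 2 * m i * x i) q :=
      (integrable_coord_mul hm2 i i).sub ((integrable_coord hm2 i).const_mul (2 * m i))
    rw [integral_add hf (integrable_const _), integral_sub (integrable_coord_mul hm2 i i)
      ((integrable_coord hm2 i).const_mul (2 * m i))]
    have : ∫ x, 2 * m i * x i ∂q = 2 * m i * m i := by
      rw [integral_const_mul, hq1]
    rw [this, integral_const]
    simp
  rw [key] at h
  nlinarith [h]

lemma dotProduct_quad (x : Fin D → ℝ) :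
    dotProduct (x - m) (S⁻¹ *ᵥ (x - m))
      = ∑ i, ∑ j, S⁻¹ i j * ((x i - m i) * (x j - m j)) := by
  simp only [dotProduct, Matrix.mulVec, Pi.sub_apply, Finset.mul_sum]
  exact Finset.sum_congr rfl fun i _ => Finset.sum_congr rfl fun j _ => by ring

variable {S q} in
lemma integral_quad (hS : S.PosDef) (hm2 : ∀ i, Integrable (fun x => (x i) ^ 2) q)
    (hq2 : ∀ i j, ∫ x, (x i - m i) * (x j - m j) ∂q = S i j) :
    ∫ x, dotProduct (x - m) (S⁻¹ *ᵥ (x - m)) ∂q = D := by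
  have hrw : (fun x : Fin D → ℝ => dotProduct (x - m) (S⁻¹ *ᵥ (x - m)))
      = fun x => ∑ i, ∑ j, S⁻¹ i j * ((x i - m i) * (x j - m j)) := by
    funext x; exact dotProduct_quad m S x
  rw [hrw, integral_finset_sum _ (fun i _ => integrable_finset_sum _
    (fun j _ => (integrable_sub_mul m hm2 i j).const_mul (S⁻¹ i j)))]
  have hterm : ∀ i, ∫ x, (∑ j, S⁻¹ i j * ((x i - m i) * (x j - m j))) ∂q
      = ∑ j, S⁻¹ i j * S i j := by
    intro i
    rw [integral_finset_sum _ (fun j _ => (integrable_sub_mul m hm2 i j).const_mul (S⁻¹ i j))]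
    exact Finset.sum_congr rfl fun j _ => by rw [integral_const_mul, hq2 i j]
  simp_rw [hterm]
  have hsym : ∀ i j, S i j = S j i := fun i j => by
    have h := hS.isHermitian
    rw [Matrix.IsHermitian] at h
    conv_lhs => rw [← h]
    simp [Matrix.conjTranspose_apply]
  have htr : ∑ i, ∑ j, S⁻¹ i j * S i j = (S⁻¹ * S).trace := by
    rw [Matrix.trace]
    refine Finset.sum_congr rfl fun i _ => ?_
    simp only [Matrix.diag, Matrix.mul_apply]
    exact Finset.sum_congr rfl fun j _ => by rw [hsym i j]
  rw [htr, Matrix.nonsing_inv_mul S (isUnit_iff_ne_zero.mpr hS.det_pos.ne'), Matrix.trace_one]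
  simp

end B
section C
variable {D : ℕ} (m : Fin D → ℝ) (S : Matrix (Fin D) (Fin D) ℝ)

variable {S} in
lemma log_gd_sub (hS : S.PosDef) (x : Fin D → ℝ) :
    Real.log (gaussianDensity m S x) - Real.log (gaussianDensity (0 : Fin D → ℝ) 1 x)
      = -(1/2) * Real.log S.det - (1/2) * dotProduct (x - m) (S⁻¹ *ᵥ (x - m))
        + (1/2) * ∑ i, x i * x i := by
  have h2π : (0:ℝ) < (2 * Real.pi) ^ D := pow_pos (by positivity) _
  have hdet := hS.det_pos
  have hgen : ∀ (c : ℝ), 0 < c → ∀ t : ℝ,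
      Real.log ((Real.sqrt c)⁻¹ * Real.exp t) = -(1/2) * Real.log c + t := by
    intro c hc t
    rw [Real.log_mul (by positivity) (Real.exp_ne_zero t), Real.log_inv,
      Real.log_sqrt hc.le, Real.log_exp]
    ring
  unfold gaussianDensity
  rw [hgen _ (mul_pos h2π hdet) _, Matrix.det_one, mul_one, hgen _ h2π _,
    Real.log_mul h2π.ne' hdet.ne']
  simp only [sub_zero, inv_one, Matrix.one_mulVec, dotProduct]
  ring

end C

section D1
variable {D : ℕ} (m : Fin D → ℝ) {S : Matrix (Fin D) (Fin D) ℝ}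
  {q : Measure (Fin D → ℝ)} [IsProbabilityMeasure q]

lemma integral_log_ratio (hS : S.PosDef)
    (hm2 : ∀ i, Integrable (fun x => (x i) ^ 2) q)
    (hq1 : ∀ i, ∫ x, x i ∂q = m i)
    (hq2 : ∀ i j, ∫ x, (x i - m i) * (x j - m j) ∂q = S i j) :
    ∫ x, (Real.log (gaussianDensity m S x) - Real.log (gaussianDensity (0:Fin D → ℝ) 1 x)) ∂q
      = -(1/2) * Real.log S.det - (1/2) * D + (1/2) * ∑ i, (S i i + m i ^ 2) := by
  have hQint : Integrable (fun x : Fin D → ℝ => dotProduct (x - m) (S⁻¹ *ᵥ (x - m))) q := by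
    have hrw : (fun x : Fin D → ℝ => dotProduct (x - m) (S⁻¹ *ᵥ (x - m)))
        = fun x => ∑ i, ∑ j, S⁻¹ i j * ((x i - m i) * (x j - m j))  := by
      funext x; exact dotProduct_quad m S x
    rw [hrw]
    exact integrable_finset_sum _ fun i _ => integrable_finset_sum _
      fun j _ => (integrable_sub_mul m hm2 i j).const_mul _
  have hAint : Integrable (fun x : Fin D → ℝ => ∑ i, x i * x i) q :=
    integrable_finset_sum _ fun i _ => integrable_coord_mul hm2 i i
  have hrw : (fun x : Fin D → ℝ =>
      Real.log (gaussianDensity m S x) - Real.log (gaussianDensity (0:Fin D → ℝ) 1 x))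
      = fun x => -(1/2) * Real.log S.det +
          (-(1/2) * dotProduct (x - m) (S⁻¹ *ᵥ (x - m)) + (1/2) * ∑ i, x i * x i) := by
    funext x; rw [log_gd_sub m hS x]; ring
  rw [hrw]
  have hint : Integrable (fun x : Fin D → ℝ =>
      -(1/2) * dotProduct (x - m) (S⁻¹ *ᵥ (x - m)) + (1/2) * ∑ i, x i * x i) q :=
    (hQint.const_mul _).add (hAint.const_mul _)
  rw [integral_add (integrable_const _) hint, integral_const,
    integral_add (hQint.const_mul _) (hAint.const_mul _), integral_const_mul, integral_const_mul,
    integral_quad m hS hm2 hq2, integral_finset_sum _ fun i _ => integrable_coord_mul hm2 i i]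
  have hsq : ∀ i, ∫ x, x i * x i ∂q = S i i + m i ^ 2 := integral_coord_mul_self m S hm2 hq1 hq2
  simp_rw [hsq]
  simp only [probReal_univ, smul_eq_mul, one_mul]
  ring
end D1
noncomputable def psi (t : ℝ) : ℝ := (Real.sqrt (2 * Real.pi))⁻¹ * Real.exp (-(1/2) * t^2)

lemma sqrt_two_pi_pos : (0:ℝ) < Real.sqrt (2 * Real.pi) :=
  Real.sqrt_pos.mpr (by positivity)

lemma integrable_E : Integrable (fun t : ℝ => Real.exp (-(1/2) * t^2)) :=
  integrable_exp_neg_mul_sq one_half_pos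

lemma integral_E : ∫ t : ℝ, Real.exp (-(1/2) * t^2) = Real.sqrt (2 * Real.pi) := by
  rw [integral_gaussian]
  rw [show Real.pi / (1/2) = 2 * Real.pi by ring]

lemma integrable_mul_E : Integrable (fun t : ℝ => t * Real.exp (-(1/2) * t^2)) :=
  integrable_mul_exp_neg_mul_sq one_half_pos

lemma integrable_sq_mul_E : Integrable (fun t : ℝ => t^2 * Real.exp (-(1/2) * t^2)) := by
  have h := integrable_rpow_mul_exp_neg_mul_sq one_half_pos (s := 2) (by norm_num)
  have : ∀ t : ℝ, t ^ (2:ℝ) = t ^ (2:ℕ) := fun t => by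
    rw [show (2:ℝ) = ((2:ℕ):ℝ) by norm_num, Real.rpow_natCast]
  simpa [this] using h

lemma integral_mul_E : ∫ t : ℝ, t * Real.exp (-(1/2) * t^2) = 0 := by
  have h := integral_neg_eq_self (fun t : ℝ => t * Real.exp (-(1/2) * t^2)) volume
  have h2 : (fun t : ℝ => (-t) * Real.exp (-(1/2) * (-t)^2))
      = fun t : ℝ => -(t * Real.exp (-(1/2) * t^2)) := by
    funext t; rw [neg_sq]; ring
  rw [h2, integral_neg] at h
  linarith

lemma tendsto_neg_mul_E_atTop :
    Tendsto (fun x : ℝ => -x * Real.exp (-(1/2) * x^2)) atTop (nhds 0) := by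
  have h := tendsto_rpow_abs_mul_exp_neg_mul_sq_cocompact one_half_pos 1
  have h2 : Tendsto (fun x : ℝ => |x| ^ (1:ℝ) * Real.exp (-(1/2) * x ^ 2)) atTop (nhds 0) :=
    h.mono_left (by rw [cocompact_eq_atBot_atTop]; exact le_sup_right)
  refine squeeze_zero_norm (fun x => ?_) h2
  rw [norm_mul, norm_neg, Real.norm_eq_abs, Real.norm_eq_abs, Real.rpow_one,
    abs_of_pos (Real.exp_pos _)]

lemma tendsto_neg_mul_E_atBot :
    Tendsto (fun x : ℝ => -x * Real.exp (-(1/2) * x^2)) atBot (nhds 0) := by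
  have h := tendsto_rpow_abs_mul_exp_neg_mul_sq_cocompact one_half_pos 1
  have h2 : Tendsto (fun x : ℝ => |x| ^ (1:ℝ) * Real.exp (-(1/2) * x ^ 2)) atBot (nhds 0) :=
    h.mono_left (by rw [cocompact_eq_atBot_atTop]; exact le_sup_left)
  refine squeeze_zero_norm (fun x => ?_) h2
  rw [norm_mul, norm_neg, Real.norm_eq_abs, Real.norm_eq_abs, Real.rpow_one,
    abs_of_pos (Real.exp_pos _)]

lemma integral_sq_mul_E :
    ∫ t : ℝ, t^2 * Real.exp (-(1/2) * t^2) = Real.sqrt (2 * Real.pi) := by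
  have hderiv : ∀ x : ℝ, HasDerivAt (fun x : ℝ => -x * Real.exp (-(1/2) * x^2))
      (x^2 * Real.exp (-(1/2) * x^2) - Real.exp (-(1/2) * x^2)) x := by
    intro x
    have h1 : HasDerivAt (fun x : ℝ => -(1/2) * x^2) (-(1/2) * (2 * x^1)) x :=
      (hasDerivAt_pow 2 x).const_mul _
    have h2 := h1.exp
    have h3 := ((hasDerivAt_id x).neg.mul h2)
    refine h3.congr_deriv ?_
    simp only [Pi.neg_apply, id_eq, pow_one]
    ring
  have hint : Integrable (fun x : ℝ =>
      x^2 * Real.exp (-(1/2) * x^2) - Real.exp (-(1/2) * x^2)) :=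
    integrable_sq_mul_E.sub integrable_E
  have h := integral_of_hasDerivAt_of_tendsto hderiv hint tendsto_neg_mul_E_atBot
    tendsto_neg_mul_E_atTop
  rw [sub_zero] at h
  rw [integral_sub integrable_sq_mul_E integrable_E, integral_E] at h
  linarith

lemma continuous_psi : Continuous psi := by
  unfold psi
  exact continuous_const.mul (Real.continuous_exp.comp (continuous_const.mul (continuous_pow 2)))

lemma integrable_psi : Integrable psi := integrable_E.const_mul _
lemma integral_psi : ∫ t, psi t = 1 := by
  unfold psi
  rw [integral_const_mul, integral_E]
  exact inv_mul_cancel₀ sqrt_two_pi_pos.ne'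

lemma integrable_psi_mul : Integrable (fun t => psi t * t) := by
  unfold psi
  have : (fun t : ℝ => (Real.sqrt (2 * Real.pi))⁻¹ * Real.exp (-(1/2) * t^2) * t)
      = fun t => (Real.sqrt (2 * Real.pi))⁻¹ * (t * Real.exp (-(1/2) * t^2)) := by
    funext t; ring
  rw [this]
  exact integrable_mul_E.const_mul _

lemma integral_psi_mul : ∫ t, psi t * t = 0 := by
  unfold psi
  have : (fun t : ℝ => (Real.sqrt (2 * Real.pi))⁻¹ * Real.exp (-(1/2) * t^2) * t)
      = fun t => (Real.sqrt (2 * Real.pi))⁻¹ * (t * Real.exp (-(1/2) * t^2)) := by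
    funext t; ring
  rw [this, integral_const_mul, integral_mul_E, mul_zero]

lemma integrable_psi_mul_sq : Integrable (fun t => psi t * (t * t)) := by
  unfold psi
  have : (fun t : ℝ => (Real.sqrt (2 * Real.pi))⁻¹ * Real.exp (-(1/2) * t^2) * (t * t))
      = fun t => (Real.sqrt (2 * Real.pi))⁻¹ * (t^2 * Real.exp (-(1/2) * t^2)) := by
    funext t; ring
  rw [this]
  exact integrable_sq_mul_E.const_mul _

lemma integral_psi_mul_sq : ∫ t, psi t * (t * t) = 1 := by
  unfold psi
  have : (fun t : ℝ => (Real.sqrt (2 * Real.pi))⁻¹ * Real.exp (-(1/2) * t^2) * (t * t))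
      = fun t => (Real.sqrt (2 * Real.pi))⁻¹ * (t^2 * Real.exp (-(1/2) * t^2)) := by
    funext t; ring
  rw [this, integral_const_mul, integral_sq_mul_E]
  exact inv_mul_cancel₀ sqrt_two_pi_pos.ne'

section F
variable {D : ℕ}

lemma gd_nonneg (m : Fin D → ℝ) (S : Matrix (Fin D) (Fin D) ℝ) (x : Fin D → ℝ) :
    0 ≤ gaussianDensity m S x :=
  mul_nonneg (inv_nonneg.mpr (Real.sqrt_nonneg _)) (Real.exp_pos _).le

lemma gd_std_eq (x : Fin D → ℝ) :
    gaussianDensity (0 : Fin D → ℝ) 1 x = ∏ i, psi (x i) := by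
  unfold gaussianDensity psi
  rw [Matrix.det_one, mul_one, sub_zero, inv_one, Matrix.one_mulVec]
  rw [Finset.prod_mul_distrib, Finset.prod_const, Finset.card_univ, Fintype.card_fin]
  rw [← Real.exp_sum]
  congr 1
  · have hs : Real.sqrt ((2 * Real.pi) ^ D) = (Real.sqrt (2 * Real.pi)) ^ D := by
      have h2 : (0:ℝ) ≤ 2 * Real.pi := by positivity
      rw [Real.sqrt_eq_rpow, Real.sqrt_eq_rpow, ← Real.rpow_natCast ((2 * Real.pi) ^ (1/2 : ℝ)) D,
        ← Real.rpow_mul h2, ← Real.rpow_natCast (2 * Real.pi) D, ← Real.rpow_mul h2]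
      congr 1
      ring
    rw [hs, ← inv_pow]
  · simp only [dotProduct, Finset.mul_sum]
    exact congrArg Real.exp (Finset.sum_congr rfl fun i _ => by ring)

lemma integral_gaussianMeasure' (m : Fin D → ℝ) (S : Matrix (Fin D) (Fin D) ℝ)
    (h : (Fin D → ℝ) → ℝ) :
    ∫ x, h x ∂(gaussianMeasure m S) = ∫ x, gaussianDensity m S x * h x := by
  have hm := (measurable_gaussianDensity m S).real_toNNReal
  have key := integral_withDensity_eq_integral_smul (μ := volume) hm h
  have heq : (volume.withDensity fun x => ((gaussianDensity m S x).toNNReal : ℝ≥0∞))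
      = gaussianMeasure m S := rfl
  rw [heq] at key
  rw [key]
  congr 1
  funext x
  rw [NNReal.smul_def, smul_eq_mul, Real.coe_toNNReal _ (gd_nonneg m S x)]

lemma integrable_gaussianMeasure_iff (m : Fin D → ℝ) (S : Matrix (Fin D) (Fin D) ℝ)
    (h : (Fin D → ℝ) → ℝ) :
    Integrable h (gaussianMeasure m S)
      ↔ Integrable (fun x => h x * gaussianDensity m S x) volume := by
  rw [gaussianMeasure, integrable_withDensity_iff (measurable_gaussianDensity m S).ennreal_ofReal
    (ae_of_all _ fun x => ENNReal.ofReal_lt_top)]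
  have : (fun x => h x * (ENNReal.ofReal (gaussianDensity m S x)).toReal)
      = fun x => h x * gaussianDensity m S x := by
    funext x; rw [ENNReal.toReal_ofReal (gd_nonneg m S x)]
  rw [this]

lemma integral_std_prod (c : Fin D → ℝ → ℝ) :
    ∫ x, (∏ i, c i (x i)) ∂(gaussianMeasure (0 : Fin D → ℝ) 1)
      = ∏ i, ∫ t, psi t * c i t := by
  rw [integral_gaussianMeasure']
  have h : (fun x : Fin D → ℝ => gaussianDensity 0 1 x * ∏ i, c i (x i))
      = fun x => ∏ i, (fun t => psi t * c i t) (x i) := by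
    funext x
    rw [gd_std_eq, ← Finset.prod_mul_distrib]
  rw [h]
  exact integral_fintype_prod_eq_prod (fun i => fun t => psi t * c i t)

lemma integrable_std_prod (c : Fin D → ℝ → ℝ)
    (hc : ∀ i, Integrable (fun t => psi t * c i t)) :
    Integrable (fun x => ∏ i, c i (x i)) (gaussianMeasure (0 : Fin D → ℝ) 1) := by
  rw [integrable_gaussianMeasure_iff]
  have h : (fun x : Fin D → ℝ => (∏ i, c i (x i)) * gaussianDensity 0 1 x)
      = fun x => ∏ i, (fun t => psi t * c i t) (x i) := by
    funext x
    rw [gd_std_eq, ← Finset.prod_mul_distrib]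
    exact Finset.prod_congr rfl fun i _ => mul_comm _ _
  rw [h]
  exact Integrable.fintype_prod hc

lemma isProbabilityMeasure_std :
    IsProbabilityMeasure (gaussianMeasure (0 : Fin D → ℝ) 1) := by
  constructor
  have hint : Integrable (fun x : Fin D → ℝ => gaussianDensity 0 1 x) volume := by
    have h : (fun x : Fin D → ℝ => gaussianDensity 0 1 x)
        = fun x => ∏ i, psi (x i) := by funext x; exact gd_std_eq x
    rw [h]
    exact Integrable.fintype_prod fun _ => integrable_psi
  have hval : ∫ x : Fin D → ℝ, gaussianDensity 0 1 x = 1 := by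
    have h : (fun x : Fin D → ℝ => gaussianDensity 0 1 x)
        = fun x => ∏ i, psi (x i) := by funext x; exact gd_std_eq x
    rw [h, volume_pi, integral_fintype_prod_eq_prod (fun _ => psi)]
    simp [integral_psi]
  rw [gaussianMeasure, withDensity_apply _ MeasurableSet.univ, Measure.restrict_univ,
    ← ofReal_integral_eq_lintegral_ofReal hint (ae_of_all _ (gd_nonneg 0 1)), hval,
    ENNReal.ofReal_one]

lemma integrable_coord_std (k : Fin D) :
    Integrable (fun x : Fin D → ℝ => x k) (gaussianMeasure (0 : Fin D → ℝ) 1) := by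
  have hc : ∀ i : Fin D, Integrable (fun t : ℝ => psi t * (if i = k then t else 1)) := by
    intro i
    rcases eq_or_ne i k with rfl | hne
    · simp only [if_pos rfl]; exact integrable_psi_mul
    · simp only [if_neg hne, mul_one]; exact integrable_psi
  have key := integrable_std_prod (fun i t => if i = k then t else 1) hc
  refine key.congr (ae_of_all _ fun x => ?_)
  show (∏ i, if i = k then x i else 1) = x k
  rw [Finset.prod_ite_eq' Finset.univ k (fun i => x i)]
  simp

lemma integral_coord_std (k : Fin D) :
    ∫ x, x k ∂(gaussianMeasure (0 : Fin D → ℝ) 1) = 0 := by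
  calc ∫ x, x k ∂(gaussianMeasure (0 : Fin D → ℝ) 1)
      = ∫ x, ∏ i, (fun i t => if i = k then t else 1 : Fin D → ℝ → ℝ) i (x i)
          ∂(gaussianMeasure (0 : Fin D → ℝ) 1) := by
        congr 1
        funext x
        show x k = (∏ i, if i = k then x i else 1)
        rw [Finset.prod_ite_eq' Finset.univ k (fun i => x i)]
        simp
    _ = ∏ i, ∫ t, psi t * (fun i t => if i = k then t else 1 : Fin D → ℝ → ℝ) i t :=
        integral_std_prod (fun i t => if i = k then t else 1)
    _ = 0 := by
        refine Finset.prod_eq_zero (Finset.mem_univ k) ?_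
        simp [integral_psi_mul]

lemma integrable_coord_mul_std (k l : Fin D) :
    Integrable (fun x : Fin D → ℝ => x k * x l) (gaussianMeasure (0 : Fin D → ℝ) 1) := by
  have hc : ∀ i : Fin D,
      Integrable (fun t : ℝ => psi t * ((if i = k then t else 1) * (if i = l then t else 1))) := by
    intro i
    rcases eq_or_ne i k with rfl | hnk
    · rcases eq_or_ne i l with rfl | hnl
      · simp only [if_pos rfl]; exact integrable_psi_mul_sq
      · simp only [if_pos rfl, if_neg hnl, mul_one]; exact integrable_psi_mul
    · rcases eq_or_ne i l with rfl | hnl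
      · simp only [if_pos rfl, if_neg hnk, one_mul]; exact integrable_psi_mul
      · simp only [if_neg hnk, if_neg hnl, mul_one]; exact integrable_psi
  have key := integrable_std_prod
    (fun i t => (if i = k then t else 1) * (if i = l then t else 1)) hc
  refine key.congr (ae_of_all _ fun x => ?_)
  show (∏ i, (if i = k then x i else 1) * (if i = l then x i else 1)) = x k * x l
  rw [Finset.prod_mul_distrib, Finset.prod_ite_eq' Finset.univ k (fun i => x i),
    Finset.prod_ite_eq' Finset.univ l (fun i => x i)]
  simp

lemma integral_coord_mul_std (k l : Fin D) :
    ∫ x, x k * x l ∂(gaussianMeasure (0 : Fin D → ℝ) 1) = if k = l then 1 else 0 := by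
  calc ∫ x, x k * x l ∂(gaussianMeasure (0 : Fin D → ℝ) 1)
      = ∫ x, ∏ i, (fun i t => (if i = k then t else 1) * (if i = l then t else 1)
          : Fin D → ℝ → ℝ) i (x i) ∂(gaussianMeasure (0 : Fin D → ℝ) 1) := by
        congr 1
        funext x
        show x k * x l = (∏ i, (if i = k then x i else 1) * (if i = l then x i else 1))
        rw [Finset.prod_mul_distrib, Finset.prod_ite_eq' Finset.univ k (fun i => x i),
          Finset.prod_ite_eq' Finset.univ l (fun i => x i)]
        simp
    _ = ∏ i, ∫ t, psi t * ((fun i t => (if i = k then t else 1) * (if i = l then t else 1)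
          : Fin D → ℝ → ℝ) i t) :=
        integral_std_prod (fun i t => (if i = k then t else 1) * (if i = l then t else 1))
    _ = if k = l then 1 else 0 := by
        rcases eq_or_ne k l with rfl | hne
        · rw [if_pos rfl]
          refine Finset.prod_eq_one fun i _ => ?_
          rcases eq_or_ne i k with rfl | hni
          · simpa using integral_psi_mul_sq
          · simp [hni, integral_psi]
        · rw [if_neg hne]
          refine Finset.prod_eq_zero (Finset.mem_univ k) ?_
          simp [hne, integral_psi_mul]

end F

section G
variable {D : ℕ}

lemma mulVec_coord (A : Matrix (Fin D) (Fin D) ℝ) (u : Fin D → ℝ) (i : Fin D) :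
    (A *ᵥ u) i = ∑ j, A i j * u j := by
  simp [Matrix.mulVec, dotProduct]

lemma measurable_phi (m : Fin D → ℝ) (A : Matrix (Fin D) (Fin D) ℝ) :
    Measurable (fun u : Fin D → ℝ => m + A *ᵥ u) := by
  have h : Continuous fun u : Fin D → ℝ => A *ᵥ u := by
    have heq : (fun u : Fin D → ℝ => A *ᵥ u) = fun u => fun i => ∑ j, A i j * u j := by
      funext u
      funext i
      exact mulVec_coord A u i
    rw [heq]
    exact continuous_pi fun i => continuous_finset_sum _ fun j _ =>
      continuous_const.mul (continuous_apply j)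
  exact (continuous_const.add h).measurable

variable {S : Matrix (Fin D) (Fin D) ℝ} {A : Matrix (Fin D) (Fin D) ℝ}

lemma quad_transform (hAS : A * A = S) (hAt : Aᵀ = A) (hdA : A.det ≠ 0) (u : Fin D → ℝ) :
    dotProduct (A *ᵥ u) (S⁻¹ *ᵥ (A *ᵥ u)) = dotProduct u u := by
  have hIA : IsUnit A.det := isUnit_iff_ne_zero.mpr hdA
  have hSinv : S⁻¹ = A⁻¹ * A⁻¹ := by rw [← hAS, Matrix.mul_inv_rev]
  have h1 : S⁻¹ *ᵥ (A *ᵥ u) = A⁻¹ *ᵥ u := by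
    rw [hSinv, Matrix.mulVec_mulVec, Matrix.mul_assoc, Matrix.nonsing_inv_mul A hIA,
      Matrix.mul_one]
  rw [h1, Matrix.dotProduct_mulVec]
  have h2 : (A *ᵥ u) ᵥ* A⁻¹ = u := by
    rw [← Matrix.vecMul_transpose, Matrix.vecMul_vecMul, hAt, Matrix.mul_nonsing_inv A hIA,
      Matrix.vecMul_one]
  rw [h2]

variable (m : Fin D → ℝ) in
lemma gd_comp (hS : S.PosDef) (hAS : A * A = S) (hAt : Aᵀ = A) (hdA : A.det ≠ 0)
    (u : Fin D → ℝ) :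
    gaussianDensity (0 : Fin D → ℝ) 1 u
      = Real.sqrt S.det * gaussianDensity m S (m + A *ᵥ u) := by
  unfold gaussianDensity
  rw [add_sub_cancel_left, quad_transform hAS hAt hdA u]
  rw [Matrix.det_one, mul_one, sub_zero, inv_one, Matrix.one_mulVec]
  have h2π : (0:ℝ) < (2 * Real.pi) ^ D := pow_pos (by positivity) _
  rw [Real.sqrt_mul h2π.le]
  have hs : Real.sqrt S.det ≠ 0 := (Real.sqrt_pos.mpr hS.det_pos).ne'
  have hp : Real.sqrt ((2 * Real.pi) ^ D) ≠ 0 := (Real.sqrt_pos.mpr h2π).ne'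
  field_simp

lemma map_phi_volume (hdA : A.det ≠ 0) (m : Fin D → ℝ) :
    Measure.map (fun u : Fin D → ℝ => m + A *ᵥ u) volume
      = ENNReal.ofReal |A.det⁻¹| • volume := by
  have hcomp : (fun u : Fin D → ℝ => m + A *ᵥ u)
      = (fun y : Fin D → ℝ => m + y) ∘ (Matrix.toLin' A) := by
    funext u
    simp [Matrix.toLin'_apply]
  have hadd : Measurable fun y : Fin D → ℝ => m + y := measurable_const.add measurable_id
  have hlin : Measurable (Matrix.toLin' A) :=
    LinearMap.continuous_of_finiteDimensional (Matrix.toLin' A) |>.measurable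
  rw [hcomp, ← Measure.map_map hadd hlin, Real.map_matrix_volume_pi_eq_smul_volume_pi hdA,
    Measure.map_smul, (measurePreserving_add_left volume m).map_eq]

lemma sqrt_det_mul_abs_inv (hS : S.PosDef) (hAS : A * A = S) (hdA : A.det ≠ 0) :
    Real.sqrt S.det * |A.det⁻¹| = 1 := by
  have hdet : S.det = A.det ^ 2 := by rw [← hAS, Matrix.det_mul, sq]
  rw [hdet, Real.sqrt_sq_eq_abs, abs_inv]
  exact mul_inv_cancel₀ (abs_ne_zero.mpr hdA)

lemma map_phi_eq (hS : S.PosDef) (hAS : A * A = S) (hAt : Aᵀ = A) (hdA : A.det ≠ 0)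
    (m : Fin D → ℝ) :
    Measure.map (fun u : Fin D → ℝ => m + A *ᵥ u) (gaussianMeasure (0 : Fin D → ℝ) 1)
      = gaussianMeasure m S := by
  have hφ := measurable_phi m A
  have hgm : Measurable fun x => ENNReal.ofReal (gaussianDensity m S x) :=
    (measurable_gaussianDensity m S).ennreal_ofReal
  ext s hs
  rw [Measure.map_apply hφ hs, gaussianMeasure, gaussianMeasure,
    withDensity_apply _ (hφ hs), withDensity_apply _ hs,
    ← lintegral_indicator (hφ hs), ← lintegral_indicator hs]
  have hpoint : ∀ u, Set.indicator ((fun u : Fin D → ℝ => m + A *ᵥ u) ⁻¹' s)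
        (fun x => ENNReal.ofReal (gaussianDensity 0 1 x)) u
      = ENNReal.ofReal (Real.sqrt S.det)
        * Set.indicator s (fun x => ENNReal.ofReal (gaussianDensity m S x)) (m + A *ᵥ u) := by
    intro u
    by_cases hu : m + A *ᵥ u ∈ s
    · rw [Set.indicator_of_mem hu, Set.indicator_of_mem (by exact hu),
        gd_comp m hS hAS hAt hdA u, ENNReal.ofReal_mul (Real.sqrt_nonneg _)]
    · rw [Set.indicator_of_notMem hu, Set.indicator_of_notMem (by exact hu), mul_zero]
  simp_rw [hpoint]
  have hm2 : Measurable fun a : Fin D → ℝ =>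
      Set.indicator s (fun x => ENNReal.ofReal (gaussianDensity m S x)) (m + A *ᵥ a) :=
    (hgm.indicator hs).comp hφ
  rw [lintegral_const_mul _ hm2]
  have hmeas : Measurable (Set.indicator s fun x => ENNReal.ofReal (gaussianDensity m S x)) :=
    hgm.indicator hs
  rw [← lintegral_map hmeas hφ, map_phi_volume hdA m, lintegral_smul_measure, smul_eq_mul, ← mul_assoc,
    ← ENNReal.ofReal_mul (Real.sqrt_nonneg _), sqrt_det_mul_abs_inv hS hAS hdA,
    ENNReal.ofReal_one, one_mul]

end G

section H
variable {D : ℕ} {S A : Matrix (Fin D) (Fin D) ℝ}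

lemma isProbabilityMeasure_gaussian (hS : S.PosDef) (hAS : A * A = S) (hAt : Aᵀ = A)
    (hdA : A.det ≠ 0) (m : Fin D → ℝ) :
    IsProbabilityMeasure (gaussianMeasure m S) := by
  haveI : IsProbabilityMeasure (gaussianMeasure (0 : Fin D → ℝ) 1) := isProbabilityMeasure_std
  rw [← map_phi_eq hS hAS hAt hdA m]
  exact Measure.isProbabilityMeasure_map (measurable_phi m A).aemeasurable

lemma integral_coord_gaussian (hS : S.PosDef) (hAS : A * A = S) (hAt : Aᵀ = A)
    (hdA : A.det ≠ 0) (m : Fin D → ℝ) (i : Fin D) :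
    ∫ x, x i ∂(gaussianMeasure m S) = m i := by
  haveI : IsProbabilityMeasure (gaussianMeasure (0 : Fin D → ℝ) 1) := isProbabilityMeasure_std
  rw [← map_phi_eq hS hAS hAt hdA m,
    integral_map (measurable_phi m A).aemeasurable (measurable_pi_apply i).aestronglyMeasurable]
  have hexp : (fun u : Fin D → ℝ => (m + A *ᵥ u) i) = fun u => m i + ∑ j, A i j * u j := by
    funext u
    rw [Pi.add_apply, mulVec_coord]
  rw [hexp]
  have hsum : Integrable (fun u : Fin D → ℝ => ∑ j, A i j * u j)
      (gaussianMeasure (0 : Fin D → ℝ) 1) :=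
    integrable_finset_sum _ fun j _ => (integrable_coord_std j).const_mul _
  rw [integral_add (integrable_const _) hsum, integral_const, probReal_univ,
    integral_finset_sum _ fun j _ => (integrable_coord_std j).const_mul _]
  simp [integral_const_mul, integral_coord_std]

lemma integral_cov_gaussian (hS : S.PosDef) (hAS : A * A = S) (hAt : Aᵀ = A)
    (hdA : A.det ≠ 0) (m : Fin D → ℝ) (i j : Fin D) :
    ∫ x, (x i - m i) * (x j - m j) ∂(gaussianMeasure m S) = S i j := by
  haveI : IsProbabilityMeasure (gaussianMeasure (0 : Fin D → ℝ) 1) := isProbabilityMeasure_std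
  have hmeas : AEStronglyMeasurable (fun x : Fin D → ℝ => (x i - m i) * (x j - m j))
      (Measure.map (fun u : Fin D → ℝ => m + A *ᵥ u) (gaussianMeasure (0 : Fin D → ℝ) 1)) :=
    (((measurable_pi_apply i).sub measurable_const).mul
      ((measurable_pi_apply j).sub measurable_const)).aestronglyMeasurable
  rw [← map_phi_eq hS hAS hAt hdA m,
    integral_map (measurable_phi m A).aemeasurable hmeas]
  have hexp : (fun u : Fin D → ℝ => ((m + A *ᵥ u) i - m i) * ((m + A *ᵥ u) j - m j))
      = fun u => ∑ k, ∑ l, (A i k * A j l) * (u k * u l) := by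
    funext u
    rw [Pi.add_apply, Pi.add_apply, add_sub_cancel_left, add_sub_cancel_left,
      mulVec_coord, mulVec_coord, Finset.sum_mul_sum]
    exact Finset.sum_congr rfl fun k _ => Finset.sum_congr rfl fun l _ => by ring
  rw [hexp]
  rw [integral_finset_sum _ fun k _ => integrable_finset_sum _
    fun l _ => (integrable_coord_mul_std k l).const_mul _]
  have hterm : ∀ k, ∫ u, (∑ l, (A i k * A j l) * (u k * u l))
      ∂(gaussianMeasure (0 : Fin D → ℝ) 1) = A i k * A j k := by
    intro k
    rw [integral_finset_sum _ fun l _ => (integrable_coord_mul_std k l).const_mul _]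
    have : ∀ l, ∫ u, (A i k * A j l) * (u k * u l) ∂(gaussianMeasure (0 : Fin D → ℝ) 1)
        = if k = l then A i k * A j l else 0 := by
      intro l
      rw [integral_const_mul, integral_coord_mul_std]
      rcases eq_or_ne k l with rfl | hne
      · simp
      · simp [hne]
    simp_rw [this]
    rw [Finset.sum_ite_eq]
    simp
  simp_rw [hterm]
  have hsymA : ∀ a b, A a b = A b a := by
    intro a b
    have := congrFun (congrFun hAt b) a
    rw [Matrix.transpose_apply] at this
    rw [this]
  have : ∑ k, A i k * A j k = ∑ k, A i k * A k j :=
    Finset.sum_congr rfl fun k _ => by rw [hsymA j k]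
  rw [this, ← Matrix.mul_apply, hAS]

lemma integrable_sq_gaussian (hS : S.PosDef) (hAS : A * A = S) (hAt : Aᵀ = A)
    (hdA : A.det ≠ 0) (m : Fin D → ℝ) (i : Fin D) :
    Integrable (fun x => (x i) ^ 2) (gaussianMeasure m S) := by
  haveI : IsProbabilityMeasure (gaussianMeasure (0 : Fin D → ℝ) 1) := isProbabilityMeasure_std
  rw [← map_phi_eq hS hAS hAt hdA m,
    integrable_map_measure ((measurable_pi_apply i).pow_const 2).aestronglyMeasurable
      (measurable_phi m A).aemeasurable]
  have h1 : Integrable (fun u : Fin D → ℝ => ∑ k, (2 * m i * A i k) * u k)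
      (gaussianMeasure (0 : Fin D → ℝ) 1) :=
    integrable_finset_sum _ fun k _ => (integrable_coord_std k).const_mul _
  have h2 : Integrable (fun u : Fin D → ℝ => ∑ k, ∑ l, (A i k * A i l) * (u k * u l))
      (gaussianMeasure (0 : Fin D → ℝ) 1) :=
    integrable_finset_sum _ fun k _ => integrable_finset_sum _
      fun l _ => (integrable_coord_mul_std k l).const_mul _
  have h3 : Integrable (fun u : Fin D → ℝ => m i ^ 2 + ∑ k, (2 * m i * A i k) * u k
      + ∑ k, ∑ l, (A i k * A i l) * (u k * u l)) (gaussianMeasure (0 : Fin D → ℝ) 1) :=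
    ((integrable_const _).add h1).add h2
  refine h3.congr (ae_of_all _ fun u => ?_)
  show m i ^ 2 + _ + _ = ((fun x : Fin D → ℝ => (x i) ^ 2) ∘ fun u => m + A *ᵥ u) u
  show m i ^ 2 + (∑ k, (2 * m i * A i k) * u k) + (∑ k, ∑ l, (A i k * A i l) * (u k * u l))
      = ((m + A *ᵥ u) i) ^ 2
  rw [Pi.add_apply, mulVec_coord]
  have hb : (∑ k, A i k * u k) * (∑ k, A i k * u k)
      = ∑ k, ∑ l, (A i k * A i l) * (u k * u l) := by
    rw [Finset.sum_mul_sum]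
    exact Finset.sum_congr rfl fun k _ => Finset.sum_congr rfl fun l _ => by ring
  have hm : 2 * m i * (∑ k, A i k * u k) = ∑ k, (2 * m i * A i k) * u k := by
    rw [Finset.mul_sum]
    exact Finset.sum_congr rfl fun k _ => by ring
  rw [← hb, ← hm]
  ring

end H

section I
variable {D : ℕ} (m : Fin D → ℝ) {S : Matrix (Fin D) (Fin D) ℝ}
  {q : Measure (Fin D → ℝ)} [IsProbabilityMeasure q]

lemma integrable_log_ratio (hS : S.PosDef)
    (hm2 : ∀ i, Integrable (fun x => (x i) ^ 2) q) :
    Integrable (fun x => Real.log (gaussianDensity m S x)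
      - Real.log (gaussianDensity (0 : Fin D → ℝ) 1 x)) q := by
  have hQint : Integrable (fun x : Fin D → ℝ => dotProduct (x - m) (S⁻¹ *ᵥ (x - m))) q := by
    have hrw : (fun x : Fin D → ℝ => dotProduct (x - m) (S⁻¹ *ᵥ (x - m)))
        = fun x => ∑ i, ∑ j, S⁻¹ i j * ((x i - m i) * (x j - m j)) := by
      funext x; exact dotProduct_quad m S x
    rw [hrw]
    exact integrable_finset_sum _ fun i _ => integrable_finset_sum _
      fun j _ => (integrable_sub_mul m hm2 i j).const_mul _
  have hAint : Integrable (fun x : Fin D → ℝ => ∑ i, x i * x i) q :=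
    integrable_finset_sum _ fun i _ => integrable_coord_mul hm2 i i
  have hrw : (fun x : Fin D → ℝ =>
      Real.log (gaussianDensity m S x) - Real.log (gaussianDensity (0 : Fin D → ℝ) 1 x))
      = fun x => -(1/2) * Real.log S.det +
          (-(1/2) * dotProduct (x - m) (S⁻¹ *ᵥ (x - m)) + (1/2) * ∑ i, x i * x i) := by
    funext x; rw [log_gd_sub m hS x]; ring
  rw [hrw]
  exact (integrable_const _).add ((hQint.const_mul _).add (hAint.const_mul _))

end I

section Sq
open scoped MatrixOrder
lemma exists_sym_sqrt {D : ℕ} {S : Matrix (Fin D) (Fin D) ℝ} (hS : S.PosDef) :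
    ∃ A : Matrix (Fin D) (Fin D) ℝ, A * A = S ∧ Aᴴ = A :=
  ⟨CFC.sqrt S, CFC.sqrt_mul_sqrt_self S hS.posSemidef.nonneg,
    (CFC.sqrt_nonneg S).posSemidef.isHermitian⟩
end Sq

/-- Pythagorean identity: the KL divergence of `p` to the standard normal decomposes as the
divergence of `p` to the closest Gaussian `N(m, Σ)` plus the divergence of that Gaussian
to the standard normal. -/
theorem kl_pythagorean_identity {D : ℕ} (p : Measure (Fin D → ℝ)) [IsProbabilityMeasure p]
    (m : Fin D → ℝ) (S : Matrix (Fin D) (Fin D) ℝ) (hS : S.PosDef)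
    (hac : p ≪ volume)
    (hmom : ∀ i, Integrable (fun x => (x i) ^ 2) p)
    (hmean : ∀ i, ∫ x, x i ∂p = m i)
    (hcov : ∀ i j, ∫ x, (x i - m i) * (x j - m j) ∂p = S i j)
    (hfin : Integrable (fun x => Real.log ((p.rnDeriv (gaussianMeasure m S) x).toReal)) p) :
    klDiv' p (gaussianMeasure 0 1) =
      klDiv' p (gaussianMeasure m S) + klDiv' (gaussianMeasure m S) (gaussianMeasure 0 1) := by
  have hstdPD : (1 : Matrix (Fin D) (Fin D) ℝ).PosDef := Matrix.PosDef.one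
  -- square root of S
  obtain ⟨A, hAS, hh⟩ := exists_sym_sqrt hS
  have hAt : Aᵀ = A := by
    ext i j
    have h1 := congrFun (congrFun hh i) j
    rw [Matrix.conjTranspose_apply, star_trivial] at h1
    rw [Matrix.transpose_apply, h1]
  have hdA : A.det ≠ 0 := by
    intro h
    have : S.det = A.det * A.det := by rw [← hAS, Matrix.det_mul]
    rw [h, mul_zero] at this
    exact hS.det_pos.ne' this
  haveI hPM : IsProbabilityMeasure (gaussianMeasure m S) :=
    isProbabilityMeasure_gaussian hS hAS hAt hdA m
  have hGm2 : ∀ i, Integrable (fun x => (x i) ^ 2) (gaussianMeasure m S) :=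
    integrable_sq_gaussian hS hAS hAt hdA m
  have hGmean : ∀ i, ∫ x, x i ∂(gaussianMeasure m S) = m i :=
    integral_coord_gaussian hS hAS hAt hdA m
  have hGcov : ∀ i j, ∫ x, (x i - m i) * (x j - m j) ∂(gaussianMeasure m S) = S i j :=
    integral_cov_gaussian hS hAS hAt hdA m
  -- KL of the Gaussian to the standard Gaussian
  have hNmS : klDiv' (gaussianMeasure m S) (gaussianMeasure 0 1)
      = ∫ x, (Real.log (gaussianDensity m S x) - Real.log (gaussianDensity (0 : Fin D → ℝ) 1 x))
          ∂(gaussianMeasure m S) := by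
    have h1 := log_rnDeriv_gaussian (m := (0 : Fin D → ℝ)) (μ := gaussianMeasure m S)
      (gaussianMeasure_ac m S) hstdPD
    have h2 : (gaussianMeasure m S).rnDeriv volume
        =ᵐ[volume] fun x => ENNReal.ofReal (gaussianDensity m S x) :=
      Measure.rnDeriv_withDensity volume (measurable_gaussianDensity m S).ennreal_ofReal
    have h2' := (gaussianMeasure_ac m S).ae_le h2
    refine integral_congr_ae (h1.trans ?_)
    filter_upwards [h2'] with x hx
    rw [hx, ENNReal.toReal_ofReal (gd_nonneg m S x)]
  -- p side
  have hp1 := log_rnDeriv_gaussian (m := m) (μ := p) hac hS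
  have hp0 := log_rnDeriv_gaussian (m := (0 : Fin D → ℝ)) (μ := p) hac hstdPD
  have hint1 : Integrable (fun x => Real.log ((p.rnDeriv volume x).toReal)
      - Real.log (gaussianDensity m S x)) p := (integrable_congr hp1).mp hfin
  have hfint : Integrable (fun x => Real.log (gaussianDensity m S x)
      - Real.log (gaussianDensity (0 : Fin D → ℝ) 1 x)) p := integrable_log_ratio m hS hmom
  have e0 : klDiv' p (gaussianMeasure 0 1)
      = ∫ x, ((Real.log ((p.rnDeriv volume x).toReal) - Real.log (gaussianDensity m S x))
          + (Real.log (gaussianDensity m S x)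
            - Real.log (gaussianDensity (0 : Fin D → ℝ) 1 x))) ∂p := by
    refine integral_congr_ae (hp0.trans (ae_of_all _ fun x => ?_))
    ring
  have e1 : klDiv' p (gaussianMeasure m S)
      = ∫ x, (Real.log ((p.rnDeriv volume x).toReal)
          - Real.log (gaussianDensity m S x)) ∂p := integral_congr_ae hp1
  have hv1 := integral_log_ratio m hS hmom hmean hcov
  have hv2 := integral_log_ratio (q := gaussianMeasure m S) m hS hGm2 hGmean hGcov
  rw [e0, integral_add hint1 hfint, e1, hNmS, hv2, hv1]
end

section
/- For all n ∈ N, k ∈ {1, …, n−1}, and pairwise distinct reals a_1, …, a_n, the determinant of the n×n matrix whose i-th row is (1, a_i, …, a_i^{k−1}, a_i^{k+1}, …, a_i^n) (the Vandermonde rows with the power k omitted and power n appended) equals V(a_1, …, a_n) · e_{n−k}(a_1, …, a_n), where V is the Vandermonde determinant ∏_{i<j}(a_j − a_i) and e_m is the elementary symmetric polynomial of degree m. -/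
open Finset Polynomial

private lemma Iio_castSucc_eq_map {n : ℕ} (j : Fin n) :
    (Iio (Fin.castSucc j) : Finset (Fin (n + 1))) = (Iio j).map Fin.castSuccEmb := by
  ext i
  simp only [mem_Iio, mem_map]
  constructor
  · intro h
    have hij : (i : ℕ) < (j : ℕ) := by simpa [Fin.lt_def] using h
    have hi : (i : ℕ) < n := Nat.lt_trans hij j.2
    refine ⟨⟨(i : ℕ), hi⟩, ?_, ?_⟩
    · simpa [Fin.lt_def] using hij
    · apply Fin.ext; simp [Fin.castSuccEmb]
  · rintro ⟨l, hl, rfl⟩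
    exact Fin.castSucc_lt_castSucc_iff.mpr hl

private lemma succAbove_coe {n : ℕ} (j : Fin (n + 1)) (l : Fin n) :
    ((j.succAbove l : Fin (n + 1)) : ℕ) = if (l : ℕ) < (j : ℕ) then (l : ℕ) else (l : ℕ) + 1 := by
  rw [Fin.succAbove]
  split_ifs with h1 h2 h2
  · simp
  · exact absurd (by simpa [Fin.lt_def] using h1) h2
  · exact absurd (by simpa [Fin.lt_def] using h2) h1
  · simp

/-- Vandermonde determinant with one power omitted: for pairwise distinct `a₁, …, aₙ` and
`1 ≤ k ≤ n−1`, the determinant of the matrix with rows `(1, aᵢ, …, aᵢ^{k−1}, aᵢ^{k+1}, …, aᵢⁿ)`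
equals `V(a₁,…,aₙ) · e_{n−k}(a₁,…,aₙ)`, where `V` is the Vandermonde product and `e_m` the
elementary symmetric polynomial of degree `m`. -/
theorem det_vandermonde_omit_power {n : ℕ} (k : ℕ) (hk1 : 1 ≤ k) (hk2 : k ≤ n - 1)
    (a : Fin n → ℝ) (ha : Function.Injective a) :
    Matrix.det (Matrix.of fun i j : Fin n =>
        a i ^ (if (j : ℕ) < k then (j : ℕ) else (j : ℕ) + 1)) =
      (∏ j : Fin n, ∏ i ∈ Finset.univ.filter (· < j), (a j - a i)) *
        (∑ t ∈ Finset.powersetCard (n - k) (Finset.univ : Finset (Fin n)), ∏ i ∈ t, a i) := by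
  have hn : n ≠ 0 := by rintro rfl; omega
  have hkn : k < n := by omega
  -- the Vandermonde product and the elementary symmetric polynomial
  set V : ℝ := ∏ j : Fin n, ∏ i ∈ Finset.univ.filter (· < j), (a j - a i) with hV
  set E : ℝ := ∑ t ∈ Finset.powersetCard (n - k) (Finset.univ : Finset (Fin n)), ∏ i ∈ t, a i
    with hE
  -- the extended family in ℝ[X]
  set v : Fin (n + 1) → ℝ[X] := Fin.snoc (fun i => C (a i)) X with hv
  -- Step A : the Vandermonde determinant of `v` factors
  have hVf : V = ∏ j : Fin n, ∏ i ∈ Iio j, (a j - a i) := by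
    apply Finset.prod_congr rfl
    intro j _
    apply Finset.prod_congr _ fun _ _ => rfl
    ext i; simp
  have stepA : (Matrix.vandermonde v).det = C V * ∏ i : Fin n, (X - C (a i)) := by
    rw [Matrix.det_vandermonde]
    rw [Finset.prod_comm' (t' := Finset.univ) (s' := fun j => Iio j)
      (by intro i j; simp [Finset.mem_Ioi, Finset.mem_Iio])]
    rw [Fin.prod_univ_castSucc]
    have hlast : ∏ i ∈ Iio (Fin.last n), (v (Fin.last n) - v i) = ∏ i : Fin n, (X - C (a i)) := by
      rw [Fin.Iio_last_eq_map, Finset.prod_map]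
      apply Finset.prod_congr rfl
      intro i _
      show v (Fin.last n) - v (Fin.castSucc i) = X - C (a i)
      rw [hv, Fin.snoc_last, Fin.snoc_castSucc]
    rw [hlast]
    congr 1
    rw [hVf, map_prod]
    apply Finset.prod_congr rfl
    intro j _
    rw [Iio_castSucc_eq_map, Finset.prod_map, map_prod]
    apply Finset.prod_congr rfl
    intro i _
    show v (Fin.castSucc j) - v (Fin.castSucc i) = C (a j - a i)
    rw [hv, Fin.snoc_castSucc, Fin.snoc_castSucc, map_sub]
  -- Step B : Laplace expansion along the last row
  set D : Fin (n + 1) → ℝ := fun j => Matrix.det (Matrix.of fun i l : Fin n =>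
      a i ^ (if (l : ℕ) < (j : ℕ) then (l : ℕ) else (l : ℕ) + 1)) with hD
  have stepB : (Matrix.vandermonde v).det =
      ∑ j : Fin (n + 1), C ((-1 : ℝ) ^ ((n : ℕ) + (j : ℕ)) * D j) * X ^ (j : ℕ) := by
    rw [Matrix.det_succ_row (Matrix.vandermonde v) (Fin.last n)]
    apply Finset.sum_congr rfl
    intro j _
    have hsub : ((Matrix.vandermonde v).submatrix (Fin.last n).succAbove j.succAbove) =
        (Polynomial.C : ℝ →+* ℝ[X]).mapMatrix (Matrix.of fun i l : Fin n =>
          a i ^ (if (l : ℕ) < (j : ℕ) then (l : ℕ) else (l : ℕ) + 1)) := by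
      ext i l
      simp only [Matrix.submatrix_apply, Matrix.vandermonde_apply, RingHom.mapMatrix_apply,
        Matrix.map_apply, Matrix.of_apply, Fin.succAbove_last_apply, hv, Fin.snoc_castSucc,
        succAbove_coe]
      rw [map_pow]
    rw [hsub, ← RingHom.map_det]
    have hvl : Matrix.vandermonde v (Fin.last n) j = X ^ (j : ℕ) := by
      simp [Matrix.vandermonde_apply, hv, Fin.snoc_last]
    rw [hvl, Fin.val_last, map_mul, map_pow, map_neg, map_one]
    ring
  -- take coefficients of `X ^ k` on both sides
  have hk' : k < n + 1 := by omega
  have hcoeff : ((Matrix.vandermonde v).det).coeff k = (-1 : ℝ) ^ (n + k) * D ⟨k, hk'⟩ := by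
    rw [stepB, Polynomial.finset_sum_coeff]
    have hCpow : ∀ (m : ℕ) (d : ℝ), ((-1 : ℝ[X]) ^ m * C d) = C ((-1 : ℝ) ^ m * d) := by
      intro m d; rw [map_mul, map_pow, map_neg, map_one]
    rw [Finset.sum_eq_single (⟨k, hk'⟩ : Fin (n + 1))]
    · rw [Polynomial.coeff_mul_X_pow']
      simp only [Fin.val_mk, le_refl, if_true, Nat.sub_self, Polynomial.coeff_C, if_pos rfl]
    · intro j _ hj
      have hjk : k ≠ (j : ℕ) := by
        intro h; apply hj; ext; simpa using h.symm
      rw [Polynomial.coeff_mul_X_pow']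
      split_ifs with h
      · rw [Polynomial.coeff_C, if_neg (by omega)]
      · rfl
    · simp
  have hcoeff2 : ((Matrix.vandermonde v).det).coeff k = V * ((-1 : ℝ) ^ (n - k) * E) := by
    rw [stepA, Polynomial.coeff_C_mul]
    congr 1
    have hprod : (∏ i : Fin n, (X - C (a i))) =
        ((Finset.univ.val.map a).map fun t => X - C t).prod := by
      rw [Multiset.map_map]
      rfl
    have hcard : Multiset.card (Finset.univ.val.map a) = n := by simp
    rw [hprod, Multiset.prod_X_sub_C_coeff _ (by rw [hcard]; omega), hcard]
    congr 1
    rw [hE, Finset.esymm_map_val]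
  rw [hcoeff] at hcoeff2
  have hsign : (-1 : ℝ) ^ (n + k) * (-1 : ℝ) ^ (n - k) = 1 := by
    rw [← pow_add]
    apply Even.neg_one_pow
    have h2 : n + k + (n - k) = n + n := by omega
    rw [h2]
    exact ⟨n, rfl⟩
  have : D ⟨k, hk'⟩ = V * E := by
    have h := hcoeff2
    calc D ⟨k, hk'⟩ = ((-1 : ℝ) ^ (n + k) * (-1 : ℝ) ^ (n - k)) * D ⟨k, hk'⟩ := by
          rw [hsign, one_mul]
      _ = (-1 : ℝ) ^ (n - k) * ((-1 : ℝ) ^ (n + k) * D ⟨k, hk'⟩) := by ring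
      _ = (-1 : ℝ) ^ (n - k) * (V * ((-1 : ℝ) ^ (n - k) * E)) := by rw [← h]
      _ = ((-1 : ℝ) ^ (n - k) * (-1 : ℝ) ^ (n - k)) * (V * E) := by ring
      _ = V * E := by rw [← pow_add, Even.neg_one_pow ⟨n - k, rfl⟩, one_mul]
  simpa [hD] using this
end

section
/- (Cartwright–Field inequality) Let λ_1, …, λ_D be positive reals with arithmetic mean λ̄, geometric mean g = (∏ λ_i)^{1/D}, variance Var[λ] = (1/D)Σ(λ_i − λ̄)², maximum λ_max and minimum λ_min. Then Var[λ]/(2 λ_max) ≤ λ̄ − g ≤ Var[λ]/(2 λ_min). -/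
open Finset

private lemma mono1 : MonotoneOn (fun x : ℝ => Real.log x - (x - 1) + (x - 1) ^ 2 / 2)
    (Set.Ioi (0:ℝ)) := by
  have hderiv : ∀ x ∈ Set.Ioi (0:ℝ), HasDerivAt
      (fun x : ℝ => Real.log x - (x - 1) + (x - 1) ^ 2 / 2) ((x - 1) ^ 2 / x) x := by
    intro x hx
    have hx0 : (0:ℝ) < x := hx
    have hx' : x ≠ 0 := ne_of_gt hx0
    have h1 : HasDerivAt (fun x : ℝ => Real.log x - (x - 1) + (x - 1) ^ 2 / 2)
        (x⁻¹ - 1 + (2 * (x - 1) ^ 1 * 1) / 2) x := by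
      exact ((Real.hasDerivAt_log hx').sub ((hasDerivAt_id x).sub_const 1)).add
        ((((hasDerivAt_id x).sub_const 1).pow 2).div_const 2)
    convert h1 using 1
    field_simp
    ring
  apply monotoneOn_of_deriv_nonneg (convex_Ioi 0)
  · exact ContinuousOn.add (ContinuousOn.sub (Real.continuousOn_log.mono (by
      intro x hx; simpa using ne_of_gt hx)) (by fun_prop)) (by fun_prop)
  · intro x hx
    rw [interior_Ioi] at hx
    exact (hderiv x hx).differentiableAt.differentiableWithinAt
  · intro x hx
    rw [interior_Ioi] at hx
    rw [(hderiv x hx).deriv]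
    have hx0 : (0:ℝ) < x := hx
    exact div_nonneg (sq_nonneg _) hx0.le

private lemma mono2 : MonotoneOn (fun x : ℝ => x / 2 - 1 / (2 * x) - Real.log x)
    (Set.Ioi (0:ℝ)) := by
  have hderiv : ∀ x ∈ Set.Ioi (0:ℝ), HasDerivAt
      (fun x : ℝ => x / 2 - 1 / (2 * x) - Real.log x) ((x - 1) ^ 2 / (2 * x ^ 2)) x := by
    intro x hx
    have hx0 : (0:ℝ) < x := hx
    have hx' : x ≠ 0 := ne_of_gt hx0
    have heq : (fun x : ℝ => x / 2 - 1 / (2 * x) - Real.log x)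
        = (fun x : ℝ => x / 2 - (1/2) * x⁻¹ - Real.log x) := by
      funext y; rw [one_div, mul_inv, one_div]
    rw [heq]
    have h1 : HasDerivAt (fun x : ℝ => x / 2 - (1/2) * x⁻¹ - Real.log x)
        (1 / 2 - (1/2) * (-(x^2)⁻¹) - x⁻¹) x :=
      (((hasDerivAt_id x).div_const 2).sub ((hasDerivAt_inv hx').const_mul (1/2:ℝ))).sub
        (Real.hasDerivAt_log hx')
    convert h1 using 1
    field_simp
    ring
  apply monotoneOn_of_deriv_nonneg (convex_Ioi 0)
  · exact ContinuousOn.sub (ContinuousOn.sub (by fun_prop) (ContinuousOn.div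
      continuousOn_const (by fun_prop) (by intro x hx; simp only [Set.mem_Ioi] at hx; positivity)))
      (Real.continuousOn_log.mono (by intro x hx; simpa using ne_of_gt hx))
  · intro x hx
    rw [interior_Ioi] at hx
    exact (hderiv x hx).differentiableAt.differentiableWithinAt
  · intro x hx
    rw [interior_Ioi] at hx
    rw [(hderiv x hx).deriv]
    have hx0 : (0:ℝ) < x := hx
    positivity

private lemma log_ge_quad {x : ℝ} (hx : 1 ≤ x) : (x - 1) - (x - 1) ^ 2 / 2 ≤ Real.log x := by
  have h := mono1 (by norm_num : (1:ℝ) ∈ Set.Ioi (0:ℝ))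
    (Set.mem_Ioi.mpr (by linarith) : x ∈ Set.Ioi (0:ℝ)) hx
  simp only [Real.log_one] at h
  nlinarith [h]

private lemma log_le_quad {x : ℝ} (hx : 0 < x) (hx1 : x ≤ 1) :
    Real.log x ≤ (x - 1) - (x - 1) ^ 2 / 2 := by
  have h := mono1 (Set.mem_Ioi.mpr hx) (by norm_num : (1:ℝ) ∈ Set.Ioi (0:ℝ)) hx1
  simp only [Real.log_one] at h
  nlinarith [h]

private lemma log_le_quad' {x : ℝ} (hx : 1 ≤ x) :
    Real.log x ≤ (x - 1) - (x - 1) ^ 2 / (2 * x) := by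
  have hx0 : (0:ℝ) < x := by linarith
  have h := mono2 (by norm_num : (1:ℝ) ∈ Set.Ioi (0:ℝ)) (Set.mem_Ioi.mpr hx0) hx
  simp only [Real.log_one] at h
  norm_num at h
  have key : (x - 1) ^ 2 / (2 * x) = x / 2 - 1 + x⁻¹ * (1/2) := by
    field_simp
    ring
  linarith [h, key]

private lemma log_ge_quad' {x : ℝ} (hx : 0 < x) (hx1 : x ≤ 1) :
    (x - 1) - (x - 1) ^ 2 / (2 * x) ≤ Real.log x := by
  have h := mono2 (Set.mem_Ioi.mpr hx) (by norm_num : (1:ℝ) ∈ Set.Ioi (0:ℝ)) hx1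
  simp only [Real.log_one] at h
  norm_num at h
  have key : (x - 1) ^ 2 / (2 * x) = x / 2 - 1 + x⁻¹ * (1/2) := by
    field_simp
    ring
  linarith [h, key]

private lemma log_upper {x M : ℝ} (hx : 0 < x) (hxM : x ≤ M) (h1M : 1 ≤ M) :
    Real.log x ≤ (x - 1) - (x - 1) ^ 2 / (2 * M) := by
  have hM : (0:ℝ) < M := by linarith
  rcases le_total x 1 with h | h
  · have h1 := log_le_quad hx h
    have h2 : (x - 1) ^ 2 / (2 * M) ≤ (x - 1) ^ 2 / 2 := by gcongr; linarith
    linarith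
  · have h1 := log_le_quad' h
    have h2 : (x - 1) ^ 2 / (2 * M) ≤ (x - 1) ^ 2 / (2 * x) := by gcongr
    linarith

private lemma log_lower {x m : ℝ} (hm : 0 < m) (hmx : m ≤ x) (hm1 : m ≤ 1) :
    (x - 1) - (x - 1) ^ 2 / (2 * m) ≤ Real.log x := by
  have hx : 0 < x := lt_of_lt_of_le hm hmx
  rcases le_total x 1 with h | h
  · have h1 := log_ge_quad' hx h
    have h2 : (x - 1) ^ 2 / (2 * x) ≤ (x - 1) ^ 2 / (2 * m) := by gcongr
    linarith
  · have h1 := log_ge_quad h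
    have h2 : (x - 1) ^ 2 / 2 ≤ (x - 1) ^ 2 / (2 * m) := by
      gcongr (x-1)^2 / ?_; linarith
    linarith

private lemma log_upper' {x c M : ℝ} (hx : 0 < x) (hc : 0 < c) (hxM : x ≤ M) (hcM : c ≤ M) :
    Real.log x ≤ Real.log c + (x - c) / c - (x - c) ^ 2 / (2 * c * M) := by
  have h := log_upper (x := x / c) (M := M / c) (by positivity)
    (by gcongr) ((one_le_div hc).mpr hcM)
  rw [Real.log_div (ne_of_gt hx) (ne_of_gt hc)] at h
  have hM : (0:ℝ) < M := lt_of_lt_of_le hc hcM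
  have e1 : (x / c - 1) = (x - c) / c := by field_simp
  have e2 : (x / c - 1) ^ 2 / (2 * (M / c)) = (x - c) ^ 2 / (2 * c * M) := by
    field_simp
  rw [e2, e1] at h
  linarith

private lemma log_lower' {x c m : ℝ} (hc : 0 < c) (hm : 0 < m) (hmx : m ≤ x) (hmc : m ≤ c) :
    Real.log c + (x - c) / c - (x - c) ^ 2 / (2 * c * m) ≤ Real.log x := by
  have hx : 0 < x := lt_of_lt_of_le hm hmx
  have h := log_lower (x := x / c) (m := m / c) (by positivity)
    (by gcongr) ((div_le_one hc).mpr hmc)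
  rw [Real.log_div (ne_of_gt hx) (ne_of_gt hc)] at h
  have e1 : (x / c - 1) = (x - c) / c := by field_simp
  have e2 : (x / c - 1) ^ 2 / (2 * (m / c)) = (x - c) ^ 2 / (2 * c * m) := by
    field_simp
  rw [e2, e1] at h
  linarith
/-- Cartwright–Field inequality: for positive reals `λ₁, …, λ_D` with arithmetic mean `λ̄`,
geometric mean `g`, variance `Var[λ]`, maximum `λmax` and minimum `λmin`,
`Var[λ]/(2 λmax) ≤ λ̄ − g ≤ Var[λ]/(2 λmin)`. -/
theorem cartwright_field {D : ℕ} (hD : 0 < D) (lam : Fin D → ℝ)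
    (hpos : ∀ i, 0 < lam i) (lmax lmin : ℝ)
    (hmax : IsGreatest (Set.range lam) lmax) (hmin : IsLeast (Set.range lam) lmin) :
    ((1 / D) * ∑ i, (lam i - (1 / D) * ∑ j, lam j) ^ 2) / (2 * lmax) ≤
        (1 / D) * (∑ i, lam i) - (∏ i, lam i) ^ ((1 : ℝ) / D) ∧
      (1 / D) * (∑ i, lam i) - (∏ i, lam i) ^ ((1 : ℝ) / D) ≤
        ((1 / D) * ∑ i, (lam i - (1 / D) * ∑ j, lam j) ^ 2) / (2 * lmin) := by
  have : Nonempty (Fin D) := Fin.pos_iff_nonempty.mp hD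
  have hD' : (0:ℝ) < (D:ℝ) := by exact_mod_cast hD
  have hD0 : (D:ℝ) ≠ 0 := ne_of_gt hD'
  -- basic facts about lmax, lmin
  have hle : ∀ i, lam i ≤ lmax := fun i => hmax.2 ⟨i, rfl⟩
  have hge : ∀ i, lmin ≤ lam i := fun i => hmin.2 ⟨i, rfl⟩
  obtain ⟨imax, himax⟩ := hmax.1
  obtain ⟨imin, himin⟩ := hmin.1
  have hlmin : 0 < lmin := himin ▸ hpos imin
  have hlmax : 0 < lmax := himax ▸ hpos imax
  set S := ∑ i, lam i with hSdef
  set A := (1 / (D:ℝ)) * S with hAdef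
  have hSpos : 0 < S := Finset.sum_pos (fun i _ => hpos i) Finset.univ_nonempty
  have hSA : S = (D:ℝ) * A := by rw [hAdef]; field_simp
  have hApos : 0 < A := by
    rw [hAdef]; exact mul_pos (by positivity) hSpos
  have hminA : lmin ≤ A := by
    have h1 : (D:ℝ) * lmin ≤ S := by
      calc (D:ℝ) * lmin = ∑ _i : Fin D, lmin := by
            simp [Finset.sum_const, Finset.card_univ, mul_comm]
        _ ≤ S := Finset.sum_le_sum (fun i _ => hge i)
    rw [hAdef]
    rw [div_mul_eq_mul_div, one_mul, le_div_iff₀ hD']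
    linarith [h1]
  have hAmax : A ≤ lmax := by
    have h1 : S ≤ (D:ℝ) * lmax := by
      calc S ≤ ∑ _i : Fin D, lmax := Finset.sum_le_sum (fun i _ => hle i)
        _ = (D:ℝ) * lmax := by simp [Finset.sum_const, Finset.card_univ, mul_comm]
    rw [hAdef, div_mul_eq_mul_div, one_mul, div_le_iff₀ hD']
    linarith [h1]
  set V := (1 / (D:ℝ)) * ∑ i, (lam i - A) ^ 2 with hVdef
  have hV0 : 0 ≤ V := by
    rw [hVdef]
    exact mul_nonneg (by positivity) (Finset.sum_nonneg (fun i _ => sq_nonneg _))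
  have hsum0 : ∑ i, (lam i - A) = 0 := by
    rw [Finset.sum_sub_distrib, Finset.sum_const, Finset.card_univ, Fintype.card_fin,
      ← hSdef, hSA, nsmul_eq_mul]
    ring
  have hsq : ∑ i, (lam i - A) ^ 2 = (D:ℝ) * V := by rw [hVdef]; field_simp
  -- geometric mean as exp of average log
  have hprod : 0 < ∏ i, lam i := Finset.prod_pos (fun i _ => hpos i)
  set L := ∑ i, Real.log (lam i) with hLdef
  have hg : (∏ i, lam i) ^ ((1:ℝ)/(D:ℝ)) = Real.exp (L * (1/(D:ℝ))) := by
    rw [Real.rpow_def_of_pos hprod, Real.log_prod (fun i _ => (hpos i).ne'), hLdef]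
  clear_value S A V L
  constructor
  · -- lower bound : V / (2*lmax) ≤ A - g
    set t := V / (2 * lmax) with htdef
    have ht0 : 0 ≤ t := by rw [htdef]; exact div_nonneg hV0 (by positivity)
    have hVle : V ≤ A * (lmax - A) := by
      have h1 : ∑ i, lam i ^ 2 ≤ lmax * S := by
        rw [hSdef, Finset.mul_sum]
        exact Finset.sum_le_sum (fun i _ => by nlinarith [hpos i, hle i])
      have h2 : ∑ i, (lam i - A) ^ 2 = (∑ i, lam i ^ 2) - (D:ℝ) * A ^ 2 := by
        have : ∀ i, (lam i - A)^2 = lam i ^2 - 2*A*lam i + A^2 := fun i => by ring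
        rw [Finset.sum_congr rfl (fun i _ => this i)]
        rw [Finset.sum_add_distrib, Finset.sum_sub_distrib, ← Finset.mul_sum,
          Finset.sum_const, Finset.card_univ, Fintype.card_fin, ← hSdef, hSA,
          nsmul_eq_mul]
        ring
      have h3 : (D:ℝ) * V ≤ (D:ℝ) * (A * (lmax - A)) := by
        rw [← hsq, h2]
        calc (∑ i, lam i ^ 2) - (D:ℝ) * A ^ 2 ≤ lmax * S - (D:ℝ) * A^2 := by linarith
          _ = (D:ℝ) * (A * (lmax - A)) := by rw [hSA]; ring
      exact le_of_mul_le_mul_left h3 hD'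
    have htA : t ≤ A / 2 := by
      rw [htdef, div_le_div_iff₀ (mul_pos two_pos hlmax) two_pos]
      nlinarith [hVle, hApos, hAmax, hlmax]
    set B := A - t with hBdef
    clear_value t
    have hB0 : 0 < B := by rw [hBdef]; linarith
    have hBmax : B ≤ lmax := by rw [hBdef]; linarith
    clear_value B
    -- pointwise upper bound on log
    have hpt : ∀ i, Real.log (lam i) ≤
        Real.log B + (lam i - B)/B - (lam i - B)^2/(2*B*lmax) :=
      fun i => log_upper' (hpos i) hB0 (hle i) hBmax
    have hsumB : ∑ i, (lam i - B)^2 = (D:ℝ) * V + (D:ℝ) * t^2 := by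
      have hpw : ∀ i, (lam i - B)^2 = (lam i - A)^2 + 2*t*(lam i - A) + t^2 := by
        intro i; rw [hBdef]; ring
      rw [Finset.sum_congr rfl (fun i _ => hpw i), Finset.sum_add_distrib,
        Finset.sum_add_distrib, ← Finset.mul_sum, hsum0, hsq, Finset.sum_const,
        Finset.card_univ, Fintype.card_fin, nsmul_eq_mul]
      ring
    have hLsum : L ≤ (D:ℝ) * Real.log B := by
      have h1 : L ≤ ∑ i, (Real.log B + (lam i - B)/B - (lam i - B)^2/(2*B*lmax)) :=
        hLdef ▸ Finset.sum_le_sum (fun i _ => hpt i)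
      have h2 : ∑ i, (Real.log B + (lam i - B)/B - (lam i - B)^2/(2*B*lmax))
          = (D:ℝ) * Real.log B + (S - (D:ℝ)*B)/B - ((D:ℝ)*V + (D:ℝ)*t^2)/(2*B*lmax) := by
        rw [Finset.sum_sub_distrib, Finset.sum_add_distrib, Finset.sum_const,
          Finset.card_univ, Fintype.card_fin, nsmul_eq_mul, ← Finset.sum_div,
          ← Finset.sum_div, Finset.sum_sub_distrib, Finset.sum_const,
          Finset.card_univ, Fintype.card_fin, nsmul_eq_mul, ← hSdef, hsumB]
      have h3 : (S - (D:ℝ)*B)/B = (D:ℝ)*t/B := by rw [hSA, hBdef]; ring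
      have h4 : ((D:ℝ)*V)/(2*B*lmax) = (D:ℝ)*t/B := by
        rw [htdef]; field_simp
      have h5 : 0 ≤ ((D:ℝ)*t^2)/(2*B*lmax) :=
        div_nonneg (mul_nonneg hD'.le (sq_nonneg _))
          (mul_pos (mul_pos two_pos hB0) hlmax).le
      calc L ≤ (D:ℝ) * Real.log B + (S - (D:ℝ)*B)/B - ((D:ℝ)*V + (D:ℝ)*t^2)/(2*B*lmax) := by
            rw [← h2]; exact h1
        _ = (D:ℝ) * Real.log B + (D:ℝ)*t/B - ((D:ℝ)*V)/(2*B*lmax) - ((D:ℝ)*t^2)/(2*B*lmax) := by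
            rw [h3, add_div]; ring
        _ = (D:ℝ) * Real.log B - ((D:ℝ)*t^2)/(2*B*lmax) := by rw [h4]; ring
        _ ≤ (D:ℝ) * Real.log B := by linarith
    have hgB : (∏ i, lam i) ^ ((1:ℝ)/(D:ℝ)) ≤ B := by
      rw [hg]
      calc Real.exp (L * (1/(D:ℝ))) ≤ Real.exp ((D:ℝ) * Real.log B * (1/(D:ℝ))) := by
            apply Real.exp_le_exp.mpr
            apply mul_le_mul_of_nonneg_right hLsum (by positivity)
        _ = B := by
            rw [mul_comm ((D:ℝ)) (Real.log B), mul_assoc, mul_one_div, div_self hD0,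
              mul_one, Real.exp_log hB0]
    have : t ≤ A - (∏ i, lam i) ^ ((1:ℝ)/(D:ℝ)) := by rw [hBdef] at hgB; linarith
    exact this
  · -- upper bound : A - g ≤ V / (2*lmin)
    have hpt : ∀ i, Real.log A + (lam i - A)/A - (lam i - A)^2/(2*A*lmin) ≤
        Real.log (lam i) :=
      fun i => log_lower' hApos hlmin (hge i) hminA
    have hLsum : (D:ℝ) * Real.log A - (D:ℝ)*V/(2*A*lmin) ≤ L := by
      have h1 : ∑ i, (Real.log A + (lam i - A)/A - (lam i - A)^2/(2*A*lmin)) ≤ L :=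
        hLdef ▸ Finset.sum_le_sum (fun i _ => hpt i)
      have h2 : ∑ i, (Real.log A + (lam i - A)/A - (lam i - A)^2/(2*A*lmin))
          = (D:ℝ) * Real.log A + 0/A - ((D:ℝ)*V)/(2*A*lmin) := by
        rw [Finset.sum_sub_distrib, Finset.sum_add_distrib, Finset.sum_const,
          Finset.card_univ, Fintype.card_fin, nsmul_eq_mul, ← Finset.sum_div,
          ← Finset.sum_div, hsum0, hsq]
      rw [h2] at h1
      simpa using h1
    have hgA : A - V/(2*lmin) ≤ (∏ i, lam i) ^ ((1:ℝ)/(D:ℝ)) := by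
      rw [hg]
      have e1 : ((D:ℝ) * Real.log A - (D:ℝ)*V/(2*A*lmin)) * (1/(D:ℝ))
          = Real.log A + (- (V/(2*A*lmin))) := by field_simp; ring
      have h3 : Real.exp (Real.log A + (- (V/(2*A*lmin)))) ≤ Real.exp (L * (1/(D:ℝ))) := by
        apply Real.exp_le_exp.mpr
        rw [← e1]
        exact mul_le_mul_of_nonneg_right hLsum (by positivity)
      have h4 : A * (1 + (- (V/(2*A*lmin)))) ≤ Real.exp (Real.log A + (- (V/(2*A*lmin)))) := by
        rw [Real.exp_add, Real.exp_log hApos]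
        have := Real.add_one_le_exp (- (V/(2*A*lmin)))
        nlinarith [Real.exp_pos (- (V/(2*A*lmin))), hApos]
      have e2 : A * (1 + (- (V/(2*A*lmin)))) = A - V/(2*lmin) := by
        field_simp
        ring
      linarith
    linarith
end

section
/- Among all tuples of positive reals λ_1, …, λ_D with arithmetic mean 1 (i.e., Σλ_i = D) and geometric mean g ∈ (0,1) (i.e., ∏λ_i = g^D), the condition number κ = λ_max / λ_min satisfies κ ≤ (1 + √(1 − g^D)) / (1 − √(1 − g^D)). -/
open Finset

lemma amgm_aux {D : ℕ} (hD : 0 < D) (f : Fin D → ℝ) (hf : ∀ i, 0 ≤ f i)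
    (hsumf : ∑ i, f i = D) : ∏ i, f i ≤ 1 := by
  have hDne : (D : ℝ) ≠ 0 := Nat.cast_ne_zero.mpr hD.ne'
  have h := Real.geom_mean_le_arith_mean_weighted Finset.univ (fun _ => (D : ℝ)⁻¹) f
    (fun i _ => by positivity)
    (by simp [Finset.card_univ, hDne])
    (fun i _ => hf i)
  rw [Real.finset_prod_rpow _ _ (fun i _ => hf i)] at h
  have hsum' : (∑ i, (D : ℝ)⁻¹ * f i) = 1 := by
    rw [← Finset.mul_sum, hsumf, inv_mul_cancel₀ hDne]
  rw [hsum'] at h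
  have hp : (0 : ℝ) ≤ ∏ i, f i := Finset.prod_nonneg fun i _ => hf i
  have key : (∏ i, f i) = ((∏ i, f i) ^ ((D : ℝ)⁻¹)) ^ (D : ℝ) := by
    rw [← Real.rpow_mul hp, inv_mul_cancel₀ hDne, Real.rpow_one]
  calc (∏ i, f i) = ((∏ i, f i) ^ ((D : ℝ)⁻¹)) ^ (D : ℝ) := key
    _ ≤ 1 ^ (D : ℝ) := Real.rpow_le_rpow (Real.rpow_nonneg hp _) h (by positivity)
    _ = 1 := Real.one_rpow _

/-- Among positive reals `λ₁, …, λ_D` with arithmetic mean `1` (`Σλᵢ = D`) and geometric mean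
`g ∈ (0,1)` (`∏λᵢ = g^D`), the condition number satisfies
`λmax / λmin ≤ (1 + √(1 − g^D)) / (1 − √(1 − g^D))`. -/
theorem condition_number_bound {D : ℕ} (hD : 0 < D) (lam : Fin D → ℝ)
    (hpos : ∀ i, 0 < lam i) (g : ℝ) (hg0 : 0 < g) (hg1 : g < 1)
    (hsum : ∑ i, lam i = D) (hprod : ∏ i, lam i = g ^ D)
    (lmax lmin : ℝ) (hmax : IsGreatest (Set.range lam) lmax)
    (hmin : IsLeast (Set.range lam) lmin) :
    lmax / lmin ≤ (1 + Real.sqrt (1 - g ^ D)) / (1 - Real.sqrt (1 - g ^ D)) := by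
  obtain ⟨⟨i₀, hi₀⟩, hub⟩ := hmax
  obtain ⟨⟨i₁, hi₁⟩, hlb⟩ := hmin
  have hub' : ∀ i, lam i ≤ lmax := fun i => hub ⟨i, rfl⟩
  have hlb' : ∀ i, lmin ≤ lam i := fun i => hlb ⟨i, rfl⟩
  have hmpos : 0 < lmin := hi₁ ▸ hpos i₁
  have hmM : lmin ≤ lmax := hi₀ ▸ hlb' i₀
  have hMpos : 0 < lmax := lt_of_lt_of_le hmpos hmM
  have hgD1 : g ^ D < 1 := pow_lt_one₀ hg0.le hg1 hD.ne'
  have hgD0 : 0 < g ^ D := pow_pos hg0 D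
  -- min < max, else all equal to 1, contradiction with product = g^D < 1
  have hne : lmin < lmax := by
    rcases lt_or_eq_of_le hmM with h | h
    · exact h
    · exfalso
      have hall : ∀ i, lam i = lmin := fun i =>
        le_antisymm (by rw [h]; exact hub' i) (hlb' i)
      have hsD : (D : ℝ) * lmin = D := by
        calc (D : ℝ) * lmin = ∑ _i : Fin D, lmin := by
              rw [Finset.sum_const, Finset.card_univ, Fintype.card_fin, nsmul_eq_mul]
          _ = ∑ i, lam i := Finset.sum_congr rfl (fun i _ => (hall i).symm)
          _ = D := hsum
      have hDne : (D : ℝ) ≠ 0 := Nat.cast_ne_zero.mpr hD.ne'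
      have hlm1 : lmin = 1 := mul_left_cancel₀ hDne (by rw [hsD, mul_one])
      have : (∏ i, lam i) = 1 := by simp [hall, hlm1]
      rw [hprod] at this
      linarith
  have hi01 : i₀ ≠ i₁ := by
    intro h; rw [h, hi₁] at hi₀; exact absurd hi₀ hne.ne
  -- Modified tuple
  set μ : Fin D → ℝ := fun i => if i = i₀ ∨ i = i₁ then (lmax + lmin) / 2 else lam i with hμ
  have hμnn : ∀ i, 0 ≤ μ i := by
    intro i; simp only [hμ]
    split
    · positivity
    · exact (hpos i).le
  have hμsum : ∑ i, μ i = D := by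
    rw [← hsum]
    rw [← Finset.add_sum_erase _ lam (Finset.mem_univ i₀),
        ← Finset.add_sum_erase _ μ (Finset.mem_univ i₀)]
    have hi₁mem : i₁ ∈ Finset.univ.erase i₀ := Finset.mem_erase.mpr ⟨(Ne.symm hi01), Finset.mem_univ i₁⟩
    rw [← Finset.add_sum_erase _ lam hi₁mem, ← Finset.add_sum_erase _ μ hi₁mem]
    have h1 : μ i₀ = (lmax + lmin) / 2 := by simp [hμ]
    have h2 : μ i₁ = (lmax + lmin) / 2 := by simp [hμ]
    have h3 : ∀ i ∈ (Finset.univ.erase i₀).erase i₁, μ i = lam i := by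
      intro i hi
      simp only [Finset.mem_erase] at hi
      simp [hμ, hi.1, hi.2.1]
    rw [h1, h2, Finset.sum_congr rfl h3, hi₀, hi₁]
    ring
  have hμprod : ∏ i, μ i = ((lmax + lmin) / 2) ^ 2 / (lmax * lmin) * g ^ D := by
    have hP0 : ∏ i, lam i = lmax * lmin * ∏ i ∈ (Finset.univ.erase i₀).erase i₁, lam i := by
      rw [← Finset.mul_prod_erase _ _ (Finset.mem_univ i₀)]
      have hi₁mem : i₁ ∈ Finset.univ.erase i₀ := Finset.mem_erase.mpr ⟨(Ne.symm hi01), Finset.mem_univ i₁⟩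
      rw [← Finset.mul_prod_erase _ _ hi₁mem, hi₀, hi₁, mul_assoc]
    have hPμ : ∏ i, μ i = ((lmax + lmin) / 2) ^ 2 * ∏ i ∈ (Finset.univ.erase i₀).erase i₁, lam i := by
      rw [← Finset.mul_prod_erase _ _ (Finset.mem_univ i₀)]
      have hi₁mem : i₁ ∈ Finset.univ.erase i₀ := Finset.mem_erase.mpr ⟨(Ne.symm hi01), Finset.mem_univ i₁⟩
      rw [← Finset.mul_prod_erase _ _ hi₁mem]
      have h1 : μ i₀ = (lmax + lmin) / 2 := by simp [hμ]
      have h2 : μ i₁ = (lmax + lmin) / 2 := by simp [hμ]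
      have h3 : ∀ i ∈ (Finset.univ.erase i₀).erase i₁, μ i = lam i := by
        intro i hi
        simp only [Finset.mem_erase] at hi
        simp [hμ, hi.1, hi.2.1]
      rw [h1, h2, Finset.prod_congr rfl h3]; ring
    rw [hprod] at hP0
    rw [hPμ]
    have hMm : lmax * lmin ≠ 0 := by positivity
    field_simp
    nlinarith [hP0]
  have hμle : ∏ i, μ i ≤ 1 := amgm_aux hD μ hμnn hμsum
  -- key inequality : g^D * (lmax+lmin)^2 ≤ 4 * lmax * lmin
  have hkey : g ^ D * (lmax + lmin) ^ 2 ≤ 4 * (lmax * lmin) := by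
    rw [hμprod] at hμle
    have hMm : (0:ℝ) < lmax * lmin := by positivity
    rw [div_mul_eq_mul_div, div_le_one hMm] at hμle
    nlinarith
  set s := Real.sqrt (1 - g ^ D) with hs
  have hs0 : 0 ≤ s := Real.sqrt_nonneg _
  have hs2 : s ^ 2 = 1 - g ^ D := Real.sq_sqrt (by linarith)
  have hs1 : s < 1 := by
    nlinarith [hs2]
  have hstep : lmax - lmin ≤ s * (lmax + lmin) := by
    nlinarith [hs2, sq_nonneg (s * (lmax + lmin) - (lmax - lmin)), mul_nonneg hs0 (by linarith : (0:ℝ) ≤ lmax + lmin)]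
  rw [div_le_div_iff₀ hmpos (by linarith)]
  nlinarith
end
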